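/- Let H be an N×N real symmetric matrix with an orthonormal basis of eigenvectors u₁,…,u_N ∈ ℝ^N and corresponding eigenvalues λ₁,…,λ_N. Let z ∈ ℂ with Im z > 0, let G(z) = (H − z·I)⁻¹ and m_N(z) = (1/N)·Tr G(z). Then for all indices x, y ∈ {1,…,N}, |Im(G_{xy}(z))| ≤ N · (max_{1≤α≤N} ‖u_α‖_∞²) · Im(m_N(z)). -/

import Mathlib

/-- **Green's function entries in terms of eigenvector delocalization.** Let `H` be an `N × N`
real symmetric matrix with an orthonormal basis of eigenvectors `u₁, …, u_N` and eigenvalues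
`λ₁, …, λ_N`. For `z ∈ ℂ` with `Im z > 0`, `G(z) = (H - z·I)⁻¹` and
`m_N(z) = (1/N)·Tr G(z)`, one has for all `x, y`
`|Im G_{xy}(z)| ≤ N · (max_α ‖u_α‖_∞²) · Im m_N(z)`. -/
theorem im_green_entry_le (N : ℕ) (hN : 0 < N) (H : Matrix (Fin N) (Fin N) ℝ) (hH : H.IsSymm)
    (u : Fin N → Fin N → ℝ) (lam : Fin N → ℝ)
    (heig : ∀ α, H.mulVec (u α) = lam α • u α)
    (horth : ∀ α β, ∑ i, u α i * u β i = if α = β then (1 : ℝ) else 0)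
    (z : ℂ) (hz : 0 < z.im)
    (G : Matrix (Fin N) (Fin N) ℂ) (hG : G = (H.map Complex.ofReal - z • 1)⁻¹)
    (m : ℂ) (hm : m = (N : ℂ)⁻¹ * G.trace) :
    ∀ x y : Fin N,
      |(G x y).im| ≤
        (N : ℝ) *
          (Finset.univ.sup' (Finset.univ_nonempty_iff.mpr (Fin.pos_iff_nonempty.mp hN))
            (fun α => Finset.univ.sup' (Finset.univ_nonempty_iff.mpr (Fin.pos_iff_nonempty.mp hN))
              (fun i => |u α i|))) ^ 2 * m.im := by
  intro x y
  set ne : Finset.univ.Nonempty :=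
    Finset.univ_nonempty_iff.mpr (Fin.pos_iff_nonempty.mp hN)
  set M : ℝ := Finset.univ.sup' ne
      (fun α => Finset.univ.sup' ne (fun i => |u α i|)) with hM
  have hMle : ∀ α i, |u α i| ≤ M := by
    intro α i
    calc |u α i| ≤ Finset.univ.sup' ne (fun i => |u α i|) :=
          Finset.le_sup' (fun i => |u α i|) (Finset.mem_univ i)
      _ ≤ M := Finset.le_sup' (fun α => Finset.univ.sup' ne (fun i => |u α i|)) (Finset.mem_univ α)
  -- nonvanishing of lam α - z
  have hne : ∀ α, ((lam α : ℂ) - z) ≠ 0 := by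
    intro α h
    have := congrArg Complex.im h
    simp at this
    exact absurd this.symm hz.ne
  -- completeness
  have hUU : (Matrix.of u) * Matrix.transpose (Matrix.of u) = 1 := by
    ext α β
    simpa [Matrix.mul_apply, Matrix.one_apply] using horth α β
  have hcomp : ∀ a b : Fin N, ∑ α, u α a * u α b = if a = b then (1 : ℝ) else 0 := by
    intro a b
    have h2 := congrFun (congrFun (show Matrix.transpose (Matrix.of u) * Matrix.of u = 1 from mul_eq_one_comm.mp hUU) a) b
    simpa [Matrix.mul_apply, Matrix.one_apply] using h2
  -- the candidate inverse
  set S : Matrix (Fin N) (Fin N) ℂ :=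
    Matrix.of (fun a b => ∑ α, (u α a : ℂ) * (u α b : ℂ) * ((lam α : ℂ) - z)⁻¹) with hS
  have hAS : (H.map Complex.ofReal - z • 1) * S = 1 := by
    ext a b
    have key : ∀ α : Fin N,
        (∑ j, ((H a j : ℂ) - z * (if a = j then 1 else 0)) * ((u α j : ℂ))) =
          ((lam α : ℂ) - z) * (u α a : ℂ) := by
      intro α
      have hei := congrFun (heig α) a
      have hei' : ∑ j, H a j * u α j = lam α * u α a := by
        simpa [Matrix.mulVec, dotProduct] using hei
      have hsum : (∑ j, (H a j : ℂ) * (u α j : ℂ)) = (lam α : ℂ) * (u α a : ℂ) := by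
        exact_mod_cast congrArg Complex.ofReal hei'
      calc (∑ j, ((H a j : ℂ) - z * (if a = j then 1 else 0)) * ((u α j : ℂ)))
          = (∑ j, (H a j : ℂ) * (u α j : ℂ)) -
              z * ∑ j, (if a = j then (1:ℂ) else 0) * (u α j : ℂ) := by
            rw [Finset.mul_sum, ← Finset.sum_sub_distrib]
            refine Finset.sum_congr rfl fun j _ => by ring
        _ = (lam α : ℂ) * (u α a : ℂ) - z * (u α a : ℂ) := by
            rw [hsum]
            congr 1
            simp
        _ = ((lam α : ℂ) - z) * (u α a : ℂ) := by ring
    calc ((H.map Complex.ofReal - z • 1) * S) a b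
        = ∑ j, ((H a j : ℂ) - z * (if a = j then 1 else 0)) *
            (∑ α, (u α j : ℂ) * (u α b : ℂ) * ((lam α : ℂ) - z)⁻¹) := by
          simp [Matrix.mul_apply, hS, Matrix.sub_apply, Matrix.smul_apply,
            Matrix.one_apply, Matrix.map_apply, mul_ite]
      _ = ∑ α, (∑ j, ((H a j : ℂ) - z * (if a = j then 1 else 0)) * ((u α j : ℂ))) *
            ((u α b : ℂ) * ((lam α : ℂ) - z)⁻¹) := by
          simp_rw [Finset.mul_sum, Finset.sum_mul]
          rw [Finset.sum_comm]
          exact Finset.sum_congr rfl fun α _ => Finset.sum_congr rfl fun j _ => by ring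
      _ = ∑ α, (u α a : ℂ) * (u α b : ℂ) := by
          refine Finset.sum_congr rfl fun α _ => ?_
          rw [key α]
          have hw := hne α
          field_simp
      _ = (1 : Matrix (Fin N) (Fin N) ℂ) a b := by
          have h3 : (∑ α, (u α a : ℂ) * (u α b : ℂ)) =
              (((∑ α, u α a * u α b : ℝ)) : ℂ) := by push_cast; rfl
          rw [h3, hcomp a b, Matrix.one_apply]
          simp [apply_ite Complex.ofReal]
  have hGS : G = S := by
    rw [hG]
    exact Matrix.inv_eq_right_inv hAS
  -- imaginary part of entries
  set d : Fin N → ℝ := fun α => (((lam α : ℂ) - z)⁻¹).im with hd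
  have hdpos : ∀ α, 0 < d α := by
    intro α
    have hnsq : 0 < Complex.normSq ((lam α : ℂ) - z) :=
      Complex.normSq_pos.mpr (hne α)
    have hval : d α = z.im / Complex.normSq ((lam α : ℂ) - z) := by
      simp only [hd, Complex.inv_im, Complex.sub_im, Complex.ofReal_im, zero_sub, neg_neg]
    rw [hval]
    exact div_pos hz hnsq
  have hGim : ∀ a b : Fin N, (G a b).im = ∑ α, u α a * u α b * d α := by
    intro a b
    rw [hGS]
    simp only [hS, Matrix.of_apply, Complex.im_sum]
    congr 1; ext α
    simp [Complex.mul_im, Complex.ofReal_im, Complex.ofReal_re, hd]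
  -- imaginary part of m
  have hmim : m.im = (N : ℝ)⁻¹ * ∑ α, d α := by
    have htr : G.trace.im = ∑ α, d α := by
      have h1 : G.trace.im = ∑ a, (G a a).im := by
        rw [Matrix.trace]
        exact Complex.im_sum _ _
      rw [h1]
      simp_rw [hGim]
      rw [Finset.sum_comm]
      refine Finset.sum_congr rfl fun α _ => ?_
      rw [← Finset.sum_mul, horth α α]
      simp
    have hmc : m = ((N : ℝ)⁻¹ : ℂ) * G.trace := by
      rw [hm]; norm_num
    rw [hmc]
    simp [Complex.mul_im, htr]
  -- bound
  have hMnonneg : 0 ≤ M := le_trans (abs_nonneg _) (hMle ⟨0, hN⟩ ⟨0, hN⟩)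
  have hbound : |(G x y).im| ≤ ∑ α, M ^ 2 * d α := by
    rw [hGim]
    refine le_trans (Finset.abs_sum_le_sum_abs _ _) ?_
    apply Finset.sum_le_sum
    intro α _
    rw [abs_mul, abs_of_pos (hdpos α), abs_mul]
    apply mul_le_mul_of_nonneg_right _ (hdpos α).le
    calc |u α x| * |u α y| ≤ M * M :=
        mul_le_mul (hMle α x) (hMle α y) (abs_nonneg _) hMnonneg
      _ = M ^ 2 := (sq M).symm
  have hNne : (N : ℝ) ≠ 0 := Nat.cast_ne_zero.mpr hN.ne'
  calc |(G x y).im| ≤ ∑ α, M ^ 2 * d α := hbound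
    _ = (N : ℝ) * M ^ 2 * m.im := by
        rw [hmim, ← Finset.mul_sum]
        field_simp
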